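/- Suppose that X is a path-connected metric space admitting an L-Lipschitz mean μ. Then for any two points a, b ∈ X there is a continuous curve γ : [0,2] → X such that γ(0) = a, γ(2) = b, and d(γ(t), γ(t+1)) ≤ L·d(a,b) for all t ∈ [0,1]. -/

import Mathlib

/-- If a path-connected metric space `X` admits an `L`-Lipschitz mean
`μ` (sum metric on `X²`), then any two points `a, b ∈ X` are joined by a continuous
curve `γ : [0,2] → X` with `γ 0 = a`, `γ 2 = b`, and `d(γ t, γ (t+1)) ≤ L·d(a,b)` for
all `t ∈ [0,1]`. -/
theorem lipschitz_mean_gives_symmetric_curve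
    (X : Type*) [MetricSpace X] [PathConnectedSpace X]
    (L : ℝ) (hL : 0 ≤ L) (μ : X → X → X)
    (hsym : ∀ a b : X, μ a b = μ b a)
    (hidem : ∀ a : X, μ a a = a)
    (hlip : ∀ a b a' b' : X, dist (μ a b) (μ a' b') ≤ L * (dist a a' + dist b b')) :
    ∀ a b : X, ∃ γ : ℝ → X, ContinuousOn γ (Set.Icc 0 2) ∧ γ 0 = a ∧ γ 2 = b ∧
      ∀ t ∈ Set.Icc (0 : ℝ) 1, dist (γ t) (γ (t + 1)) ≤ L * dist a b := by
  intro a b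
  obtain p := PathConnectedSpace.somePath a b
  -- μ is Lipschitz in each variable separately
  have hlipL : ∀ c : X, LipschitzWith ⟨L, hL⟩ (μ c) := by
    intro c
    apply LipschitzWith.of_dist_le_mul
    intro x y
    have := hlip c x c y
    exact (by simpa using this : _ ≤ L * dist x y)
  have hlipR : ∀ c : X, LipschitzWith ⟨L, hL⟩ (fun x => μ x c) := by
    intro c
    apply LipschitzWith.of_dist_le_mul
    intro x y
    have := hlip x c y c
    exact (by simpa using this : _ ≤ L * dist x y)
  set γ : ℝ → X := fun t => if t ≤ 1 then μ a (p.extend t) else μ (p.extend (t - 1)) b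
    with hγ
  have h1 : γ 1 = μ a b := by simp [hγ]
  refine ⟨γ, ?_, ?_, ?_, ?_⟩
  · apply Continuous.continuousOn
    apply Continuous.if_le
    · exact (hlipL a).continuous.comp p.continuous_extend
    · exact (hlipR b).continuous.comp (p.continuous_extend.comp (by continuity))
    · exact continuous_id
    · exact continuous_const
    · intro t ht
      subst ht
      simp [hsym a b]
  · simp [hγ, hidem]
  · norm_num [hγ, hidem]
  · intro t ht
    obtain ⟨ht0, ht1⟩ := ht
    have hγt : γ t = μ a (p.extend t) := by simp [hγ, ht1]
    have hγt1 : γ (t + 1) = μ (p.extend t) b := by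
      by_cases h : t + 1 ≤ 1
      · have : t = 0 := le_antisymm (by linarith) ht0
        subst this
        simp [hγ, hsym a b]
      · simp [hγ, h]
    rw [hγt, hγt1, hsym a (p.extend t)]
    have := hlip (p.extend t) a (p.extend t) b
    simpa using this
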